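/- Let A be a real n×n matrix that is NOT diagonalizable over ℝ. Then for every positive definite Hermitian matrix h = (h_{jk}) with ω = Σ h_{jk} dz_j ∧ dz̄_k, the pullbacks of ω to both ℝⁿ and S(A) = (A+i)ℝⁿ cannot both vanish. Equivalently, ℝⁿ ∪ S(A) is not Lagrangian with respect to any constant-coefficient Kähler form on ℂⁿ. -/

import Mathlib

open Matrix

noncomputable def omegaForm (n : ℕ) (h : Matrix (Fin n) (Fin n) ℂ) (U V : Fin n → ℂ) : ℂ :=
  ∑ j, ∑ k, h j k * (U j * (starRingEnd ℂ) (V k) - V j * (starRingEnd ℂ) (U k))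

noncomputable def iotaA (n : ℕ) (A : Matrix (Fin n) (Fin n) ℝ) (t : Fin n → ℝ) : Fin n → ℂ :=
  fun j => (A.mulVec t j : ℝ) + (t j : ℝ) * Complex.I

lemma omega_single_aux (n : ℕ) (h : Matrix (Fin n) (Fin n) ℂ) (a b : Fin n) :
    omegaForm n h (fun j => ((Pi.single a 1 : Fin n → ℝ) j : ℂ))
      (fun j => ((Pi.single b 1 : Fin n → ℝ) j : ℂ)) = h a b - h b a := by
  simp [omegaForm, Pi.single_apply, apply_ite Complex.ofReal, mul_sub, ite_mul, mul_ite,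
    Finset.sum_sub_distrib, Finset.sum_ite_eq, Finset.sum_ite_eq']

lemma omega_iota_single_aux (n : ℕ) (hR A : Matrix (Fin n) (Fin n) ℝ) (hsym : hRᵀ = hR)
    (a b : Fin n) :
    omegaForm n (hR.map Complex.ofReal) (iotaA n A (Pi.single a 1)) (iotaA n A (Pi.single b 1))
      = 2 * Complex.I * ((((hR * A) a b : ℝ) : ℂ) - (((hR * A) b a : ℝ) : ℂ)) := by
  have hs : ∀ c d : Fin n, hR c d = hR d c := fun c d => by
    conv_lhs => rw [← hsym, Matrix.transpose_apply]
  have hswap : ∀ c d : Fin n, (∑ j, ∑ k, (hR j k : ℂ) * A j c * A k d)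
      = ∑ j, ∑ k, (hR j k : ℂ) * A j d * A k c := by
    intro c d
    rw [Finset.sum_comm]
    refine Finset.sum_congr rfl fun j _ => Finset.sum_congr rfl fun k _ => ?_
    rw [hs k j]; ring
  simp only [omegaForm, iotaA, Matrix.mulVec_single_one, Matrix.col_apply, Matrix.map_apply, Pi.single_apply,
    apply_ite Complex.ofReal, map_add, _root_.map_mul, Complex.conj_ofReal, Complex.conj_I, mul_one]
  simp only [apply_ite (starRingEnd ℂ), _root_.map_one, _root_.map_zero, Complex.ofReal_one,
    Complex.ofReal_zero, mul_add, add_mul, mul_sub, sub_mul, mul_ite, ite_mul, mul_zero, zero_mul,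
    mul_one, one_mul, Finset.sum_ite_eq, Finset.sum_ite_eq', Finset.mem_univ, if_true,
    Finset.sum_sub_distrib, Finset.sum_add_distrib, sub_zero, zero_sub, Complex.I_mul_I,
    neg_mul, mul_neg, neg_neg, Finset.sum_neg_distrib, Finset.sum_ite_irrel, Finset.sum_const_zero]
  have hrow : ∀ c d : Fin n, (∑ x, (hR c x : ℂ) * (Complex.I * (A x d : ℝ)))
      = Complex.I * (((hR * A) c d : ℝ) : ℂ) := by
    intro c d
    rw [Matrix.mul_apply]
    push_cast
    rw [Finset.mul_sum]
    exact Finset.sum_congr rfl fun x _ => by ring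
  have hcol : ∀ c d : Fin n, (∑ x, (hR x c : ℂ) * ((A x d : ℝ) * Complex.I))
      = Complex.I * (((hR * A) c d : ℝ) : ℂ) := by
    intro c d
    rw [Matrix.mul_apply]
    push_cast
    rw [Finset.mul_sum]
    refine Finset.sum_congr rfl fun x _ => by rw [hs x c]; ring
  have hdd : ∀ c d : Fin n, (∑ j, ∑ k, (hR j k : ℂ) * ((A j c : ℝ) * (A k d : ℝ)))
      = ∑ j, ∑ k, (hR j k : ℂ) * (A j c : ℝ) * (A k d : ℝ) := by
    intro c d
    exact Finset.sum_congr rfl fun j _ => Finset.sum_congr rfl fun k _ => by ring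
  rw [hdd a b, hdd b a, hrow a b, hrow b a, hcol b a, hcol a b, hswap a b, hs b a]
  ring

theorem stmt_9 (n : ℕ) (A : Matrix (Fin n) (Fin n) ℝ)
    (hA : ¬ ∃ (P D : Matrix (Fin n) (Fin n) ℝ), IsUnit P ∧ D.IsDiag ∧ A = P * D * P⁻¹)
    (h : Matrix (Fin n) (Fin n) ℂ) (hherm : h.IsHermitian)
    (hpd : ∀ x : Fin n → ℂ, x ≠ 0 → 0 < (dotProduct (star x) (h.mulVec x)).re) :
    ¬ ((∀ u v : Fin n → ℝ,
          omegaForm n h (fun j => (u j : ℂ)) (fun j => (v j : ℂ)) = 0) ∧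
       (∀ u v : Fin n → ℝ, omegaForm n h (iotaA n A u) (iotaA n A v) = 0)) := by
  rintro ⟨h1, h2⟩
  apply hA
  -- h is symmetric
  have hsymC : ∀ a b, h a b = h b a := by
    intro a b
    have := h1 (Pi.single a 1) (Pi.single b 1)
    rw [omega_single_aux] at this
    exact sub_eq_zero.mp this
  -- h is real
  set hR : Matrix (Fin n) (Fin n) ℝ := fun a b => (h a b).re with hRdef
  have hmap : h = hR.map Complex.ofReal := by
    ext a b
    have h1' : (starRingEnd ℂ) (h b a) = h a b := congrFun (congrFun hherm a) b
    have : (starRingEnd ℂ) (h a b) = h a b := by rw [← hsymC a b] at h1'; exact h1'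
    have him : (h a b).im = 0 := Complex.conj_eq_iff_im.mp this
    simp only [Matrix.map_apply]; rw [hRdef]; simp [Complex.ext_iff, him]
  have hRsym : hRᵀ = hR := by
    ext a b
    have := hsymC b a
    rw [Matrix.transpose_apply]; simp [hRdef, this]
  -- hR is positive definite
  have hRpd : hR.PosDef := by
    refine Matrix.PosDef.of_dotProduct_mulVec_pos ?_ ?_
    · rw [Matrix.IsHermitian, Matrix.conjTranspose_eq_transpose_of_trivial]
      exact hRsym
    · intro x hx
      have hxC : (fun j => (x j : ℂ)) ≠ 0 := by
        intro hc
        apply hx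
        funext j
        have := congrFun hc j
        rw [Pi.zero_apply] at this
        exact_mod_cast this
      have := hpd _ hxC
      have heq : (star (fun j => (x j : ℂ)) ⬝ᵥ (h *ᵥ fun j => (x j : ℂ)))
          = ((star x ⬝ᵥ (hR *ᵥ x) : ℝ) : ℂ) := by
        rw [hmap]
        simp only [dotProduct, Matrix.mulVec, Pi.star_apply, Matrix.map_apply]
        push_cast
        refine Finset.sum_congr rfl fun i _ => ?_
        simp [dotProduct, Complex.conj_ofReal]
      rw [heq] at this
      simpa using this
  -- hR * A is symmetric
  have hcommE : ∀ a b, (hR * A) a b = (hR * A) b a := by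
    intro a b
    have := h2 (Pi.single a 1) (Pi.single b 1)
    rw [hmap, omega_iota_single_aux n hR A hRsym] at this
    have h2I : (2 * Complex.I : ℂ) ≠ 0 := by simp [Complex.I_ne_zero]
    have := (mul_eq_zero.mp this).resolve_left h2I
    have := sub_eq_zero.mp this
    exact_mod_cast this
  have hcomm : hR * A = Aᵀ * hR := by
    have hsymHA : (hR * A)ᵀ = hR * A := by
      ext a b
      rw [Matrix.transpose_apply]
      exact hcommE b a
    calc hR * A = (hR * A)ᵀ := hsymHA.symm
    _ = Aᵀ * hRᵀ := Matrix.transpose_mul _ _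
    _ = Aᵀ * hR := by rw [hRsym]
  -- square root
  have hps := hRpd.posSemidef
  set S : Matrix (Fin n) (Fin n) ℝ := (open scoped MatrixOrder in CFC.sqrt hR) with hSdef
  have hSS : S * S = hR := open scoped MatrixOrder in CFC.sqrt_mul_sqrt_self hR hps.nonneg
  have hSsym : Sᵀ = S := by
    have := open scoped MatrixOrder in (CFC.sqrt_nonneg hR).posSemidef.1
    rwa [Matrix.IsHermitian, Matrix.conjTranspose_eq_transpose_of_trivial] at this
  have hSdet : IsUnit S.det := by
    have : IsUnit hR.det := hRpd.isUnit.map (MonoidHom.id _) |>.map detMonoidHom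
    rw [← hSS, Matrix.det_mul] at this
    exact isUnit_of_mul_isUnit_left this
  have hSunit : IsUnit S := (Matrix.isUnit_iff_isUnit_det _).2 hSdet
  have hSinv1 : S * S⁻¹ = 1 := Matrix.mul_nonsing_inv S hSdet
  have hSinv2 : S⁻¹ * S = 1 := Matrix.nonsing_inv_mul S hSdet
  -- B := S * A * S⁻¹ is symmetric
  set B : Matrix (Fin n) (Fin n) ℝ := S * A * S⁻¹ with hBdef
  have key : Aᵀ * (S * S) = (S * S) * A := by rw [hSS, ← hcomm]
  have hBsym : Bᵀ = B := by
    have e1 : Bᵀ = S⁻¹ * Aᵀ * S := by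
      rw [hBdef, Matrix.transpose_mul, Matrix.transpose_mul, Matrix.transpose_nonsing_inv,
        hSsym, Matrix.mul_assoc]
    have e2 : S⁻¹ * (Aᵀ * (S * S)) * S⁻¹ = S⁻¹ * ((S * S) * A) * S⁻¹ := by rw [key]
    have e3 : S⁻¹ * (Aᵀ * (S * S)) * S⁻¹ = S⁻¹ * Aᵀ * S := by
      calc S⁻¹ * (Aᵀ * (S * S)) * S⁻¹ = S⁻¹ * Aᵀ * S * (S * S⁻¹) := by
            simp only [Matrix.mul_assoc]
      _ = S⁻¹ * Aᵀ * S := by rw [hSinv1, Matrix.mul_one]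
    have e4 : S⁻¹ * ((S * S) * A) * S⁻¹ = S * A * S⁻¹ := by
      calc S⁻¹ * ((S * S) * A) * S⁻¹ = (S⁻¹ * S) * (S * A * S⁻¹) := by
            simp only [Matrix.mul_assoc]
      _ = S * A * S⁻¹ := by rw [hSinv2, Matrix.one_mul]
    rw [e1, ← e3, e2, e4, hBdef]
  have hB : B.IsHermitian := by
    rw [Matrix.IsHermitian, Matrix.conjTranspose_eq_transpose_of_trivial]
    exact hBsym
  -- spectral theorem
  set U : Matrix (Fin n) (Fin n) ℝ := (hB.eigenvectorUnitary : Matrix (Fin n) (Fin n) ℝ)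
    with hUdef
  have hspec : B = U * Matrix.diagonal (RCLike.ofReal ∘ hB.eigenvalues) * star U :=
    hB.spectral_theorem
  have hUstar : U * star U = 1 := Matrix.mem_unitaryGroup_iff.mp hB.eigenvectorUnitary.2
  have hUdet : IsUnit U.det := by
    have : U.det * (star U).det = 1 := by rw [← Matrix.det_mul, hUstar, Matrix.det_one]
    exact IsUnit.of_mul_eq_one _ this
  have hUunit : IsUnit U := (Matrix.isUnit_iff_isUnit_det _).2 hUdet
  have hUinv : U⁻¹ = star U := Matrix.inv_eq_right_inv hUstar
  -- assemble
  refine ⟨S⁻¹ * U, Matrix.diagonal (RCLike.ofReal ∘ hB.eigenvalues),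
    (Matrix.isUnit_nonsing_inv_iff.2 hSunit).mul hUunit, Matrix.isDiag_diagonal _, ?_⟩
  have hPinv : (S⁻¹ * U)⁻¹ = star U * S := by
    rw [Matrix.mul_inv_rev, hUinv, Matrix.nonsing_inv_nonsing_inv S hSdet]
  rw [hPinv]
  have hAeq : A = S⁻¹ * B * S := by
    calc A = (S⁻¹ * S) * A * (S⁻¹ * S) := by rw [hSinv2, Matrix.one_mul, Matrix.mul_one]
    _ = S⁻¹ * (S * A * S⁻¹) * S := by simp only [Matrix.mul_assoc]
    _ = S⁻¹ * B * S := by rw [hBdef]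
  have hfin := congrArg (fun M => S⁻¹ * M * S) hspec
  rw [hAeq, hfin]
  simp only [Matrix.mul_assoc]
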